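/- Let d ≥ 2, let P be a d×d symmetric positive definite matrix with eigenvalues σ_1 ≥ ⋯ ≥ σ_d > 0 and orthonormal eigenvectors u_1,…,u_d, let g be a nonzero vector in span{u_1, u_2}, let α ∈ (−1/d, 0], set g̃ = g/√(gᵀPg), and define P' = (d²(1−α²)/(d²−1))(P − (2(1+dα)/((d+1)(1+α))) P g̃ g̃ᵀ P). Then: (i) for every 3 ≤ i ≤ d, u_i is an eigenvector of P' with eigenvalue (d²(1−α²)/(d²−1)) σ_i; (ii) letting σ'_1 ≥ σ'_2 be the other two eigenvalues of P', one has (σ'_1σ'_2)/(σ_1σ_2) = d⁴(1−α)³(1+α)/((d+1)³(d−1)) < 1; (iii) (d²(1−α)²/(d+1)²)σ_1 ≤ σ'_1 ≤ (d²(1−α²)/(d²−1))σ_1 and (d²(1−α)²/(d+1)²)σ_2 ≤ σ'_2 ≤ (d²(1−α²)/(d²−1))σ_2. -/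

import Mathlib

open Matrix

private lemma vmv_mulVec {d : ℕ} (x y z : Fin d → ℝ) :
    vecMulVec x y *ᵥ z = (y ⬝ᵥ z) • x := by
  ext i
  simp [vecMulVec, mulVec, dotProduct, Finset.mul_sum, mul_comm, mul_assoc, mul_left_comm]

private lemma sum_mulVec' {d : ℕ} (s : Finset (Fin d)) (A : Fin d → Matrix (Fin d) (Fin d) ℝ)
    (v : Fin d → ℝ) : (∑ i ∈ s, A i) *ᵥ v = ∑ i ∈ s, (A i *ᵥ v) := by
  ext j
  simp only [mulVec, dotProduct, Finset.sum_apply, Matrix.sum_apply, Finset.sum_mul]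
  rw [Finset.sum_comm]

private lemma eig22_bounds (x y m11 m12 m22 : ℝ) (htr : x + y = m11 + m22)
    (hpr : x*y = m11*m22 - m12^2) (hle : y ≤ x) : m11 ≤ x ∧ y ≤ m22 := by
  have h1 : (x - m11)*(x - m22) = m12^2 := by linear_combination x*htr - hpr
  have h2 : (y - m11)*(y - m22) = m12^2 := by linear_combination y*htr - hpr
  constructor
  · nlinarith [h1, sq_nonneg m12]
  · nlinarith [h2, sq_nonneg m12]

private lemma ratio_lt_one (dR α : ℝ) (hd2 : 2 ≤ dR) (hda : 0 < 1 + dR*α) (hα2 : α ≤ 0) :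
    dR^4*(1-α)^3*(1+α) < (dR+1)^3*(dR-1) := by
  have hdR0 : (0:ℝ) < dR := by linarith
  have hy0 : dR*α ≤ 0 := mul_nonpos_of_nonneg_of_nonpos (by linarith) hα2
  have hyy : (dR*α)*(1+dR*α) ≤ 0 := mul_nonpos_of_nonpos_of_nonneg hy0 hda.le
  have hy3 : 0 ≤ (dR*α)^2*(1+dR*α) := mul_nonneg (sq_nonneg _) hda.le
  have h2y : 0 < 2 + (dR*α) - (dR*α)^2 := by nlinarith [hyy, hda]
  have h3y : 0 < 3 + (dR*α) - (dR*α)^2 + (dR*α)^3 := by nlinarith [hyy, hy3, hda]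
  have hfac : 0 ≤ (dR-2)*(dR+1)^2 := mul_nonneg (by linarith) (sq_nonneg _)
  have hF : 0 < 2*dR^3 - 2*dR*(1-(dR*α)+(dR*α)^2) - (1-(dR*α)+(dR*α)^2-(dR*α)^3) := by
    nlinarith [hfac, mul_pos hdR0 h2y, h3y]
  nlinarith [mul_pos hda hF]

set_option maxHeartbeats 1000000 in
/-- Eigenstructure of the shallow-cut ellipsoid update with depth
`α ∈ (-1/d, 0]`: (i) each `u i` (`i ≥ 2`, 0-based) is an eigenvector of `P'`
with eigenvalue `(d²(1-α²)/(d²-1)) σ i`; (ii)–(iii) the two remaining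
eigenvalues `σ'₁ ≥ σ'₂` (with eigenvectors in `span{u 0, u 1}`) satisfy the
product identity and the stated bounds. -/
theorem stmt11 (d : ℕ) (hd : 2 ≤ d)
    (P : Matrix (Fin d) (Fin d) ℝ)
    (σ : Fin d → ℝ) (u : Fin d → Fin d → ℝ)
    (horth : ∀ i j, u i ⬝ᵥ u j = if i = j then (1 : ℝ) else 0)
    (hdecr : ∀ i j : Fin d, i ≤ j → σ j ≤ σ i)
    (hpos : ∀ i, 0 < σ i)
    (hP : P = ∑ i, σ i • vecMulVec (u i) (u i))
    (g : Fin d → ℝ) (hg : g ≠ 0)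
    (hspan : ∃ a b : ℝ, g = a • u ⟨0, by omega⟩ + b • u ⟨1, by omega⟩)
    (α : ℝ) (hα₁ : -(1 / (d : ℝ)) < α) (hα₂ : α ≤ 0)
    (gt : Fin d → ℝ) (hgt : gt = (Real.sqrt (g ⬝ᵥ (P *ᵥ g)))⁻¹ • g)
    (P' : Matrix (Fin d) (Fin d) ℝ)
    (hP' : P' = ((d : ℝ)^2 * (1 - α^2) / ((d : ℝ)^2 - 1)) •
      (P - (2 * (1 + (d : ℝ) * α) / (((d : ℝ) + 1) * (1 + α))) •
        (P * vecMulVec gt gt * P))) :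
    (∀ i : Fin d, 2 ≤ (i : ℕ) →
      P' *ᵥ u i = (((d : ℝ)^2 * (1 - α^2) / ((d : ℝ)^2 - 1)) * σ i) • u i) ∧
    (∀ (σ'₁ σ'₂ : ℝ) (v₁ v₂ : Fin d → ℝ),
      v₁ ≠ 0 → v₂ ≠ 0 →
      (∃ a b : ℝ, v₁ = a • u ⟨0, by omega⟩ + b • u ⟨1, by omega⟩) →
      (∃ a b : ℝ, v₂ = a • u ⟨0, by omega⟩ + b • u ⟨1, by omega⟩) →
      v₁ ⬝ᵥ v₂ = 0 →
      P' *ᵥ v₁ = σ'₁ • v₁ → P' *ᵥ v₂ = σ'₂ • v₂ → σ'₂ ≤ σ'₁ →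
      (σ'₁ * σ'₂ / (σ ⟨0, by omega⟩ * σ ⟨1, by omega⟩)
          = (d : ℝ)^4 * (1 - α)^3 * (1 + α) / (((d : ℝ) + 1)^3 * ((d : ℝ) - 1)) ∧
       (d : ℝ)^4 * (1 - α)^3 * (1 + α) / (((d : ℝ) + 1)^3 * ((d : ℝ) - 1)) < 1 ∧
       ((d : ℝ)^2 * (1 - α)^2 / ((d : ℝ) + 1)^2) * σ ⟨0, by omega⟩ ≤ σ'₁ ∧
       σ'₁ ≤ ((d : ℝ)^2 * (1 - α^2) / ((d : ℝ)^2 - 1)) * σ ⟨0, by omega⟩ ∧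
       ((d : ℝ)^2 * (1 - α)^2 / ((d : ℝ) + 1)^2) * σ ⟨1, by omega⟩ ≤ σ'₂ ∧
       σ'₂ ≤ ((d : ℝ)^2 * (1 - α^2) / ((d : ℝ)^2 - 1)) * σ ⟨1, by omega⟩)) := by
  have h0 : 0 < d := by omega
  have h1 : 1 < d := by omega
  set i0 : Fin d := ⟨0, h0⟩ with hi0def
  set i1 : Fin d := ⟨1, h1⟩ with hi1def
  have hne : i0 ≠ i1 := by
    intro h
    have := congrArg Fin.val h
    simp [hi0def, hi1def] at this
  -- real number facts about d, α
  have hd2 : (2:ℝ) ≤ (d:ℝ) := by exact_mod_cast hd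
  have hd0R : (0:ℝ) < d := by linarith
  have h1a : 0 < 1 + α := by
    have h : 1/(d:ℝ) ≤ 1 := by rw [div_le_one hd0R]; linarith
    linarith
  have h1ma : 0 < 1 - α := by linarith
  have hda : 0 < 1 + (d:ℝ)*α := by
    have := (mul_lt_mul_iff_right₀ hd0R).2 hα₁
    have h2 : (d:ℝ) * (-(1/(d:ℝ))) = -1 := by field_simp
    linarith [h2 ▸ this]
  have hdα0 : (d:ℝ)*α ≤ 0 := mul_nonpos_of_nonneg_of_nonpos (le_of_lt hd0R) hα₂
  have hd21 : 0 < (d:ℝ)^2 - 1 := by nlinarith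
  have h1a2 : 0 < 1 - α^2 := by nlinarith
  -- scalar constants
  set c : ℝ := (d : ℝ)^2 * (1 - α^2) / ((d : ℝ)^2 - 1) with hcdef
  set β : ℝ := 2 * (1 + (d : ℝ) * α) / (((d : ℝ) + 1) * (1 + α)) with hβdef
  have hc : 0 < c := by rw [hcdef]; positivity
  have hβ : 0 ≤ β := by rw [hβdef]; positivity
  have hβlt : β < 1 := by
    rw [hβdef, div_lt_one (by positivity)]
    nlinarith [mul_pos (show (0:ℝ) < (d:ℝ)-1 by linarith) h1ma]
  -- dot product facts
  have hdot : ∀ x y z w : ℝ,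
      (x • u i0 + y • u i1) ⬝ᵥ (z • u i0 + w • u i1) = x*z + y*w := by
    intro x y z w
    simp [add_dotProduct, dotProduct_add, smul_dotProduct, dotProduct_smul, horth,
      hne, hne.symm, smul_eq_mul]
    ring
  have hd0 : ∀ x y : ℝ, u i0 ⬝ᵥ (x • u i0 + y • u i1) = x := by
    intro x y
    simp [dotProduct_add, dotProduct_smul, horth, hne, hne.symm, smul_eq_mul]
  have hd1 : ∀ x y : ℝ, u i1 ⬝ᵥ (x • u i0 + y • u i1) = y := by
    intro x y
    simp [dotProduct_add, dotProduct_smul, horth, hne, hne.symm, smul_eq_mul]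
  -- action of P on the eigenvectors
  have hPu : ∀ j, P *ᵥ u j = σ j • u j := by
    intro j
    rw [hP, sum_mulVec']
    have h : ∀ i : Fin d, (σ i • vecMulVec (u i) (u i)) *ᵥ u j
        = (σ i * (if i = j then (1:ℝ) else 0)) • u i := by
      intro i
      rw [smul_mulVec, vmv_mulVec, horth, smul_smul]
    simp_rw [h]
    simp
  -- normalization
  set S : ℝ := g ⬝ᵥ (P *ᵥ g) with hSdef
  set r : ℝ := (Real.sqrt S)⁻¹ with hrdef
  obtain ⟨a, b, hgab⟩ := hspan
  have hab : a ≠ 0 ∨ b ≠ 0 := by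
    by_contra h
    push_neg at h
    exact hg (by rw [hgab, h.1, h.2]; simp)
  have hPg : P *ᵥ g = (σ i0 * a) • u i0 + (σ i1 * b) • u i1 := by
    rw [hgab, mulVec_add, mulVec_smul, mulVec_smul, hPu, hPu]
    module
  have hSval : S = a^2*σ i0 + b^2*σ i1 := by
    rw [hSdef, hPg]
    conv_lhs => rw [hgab]
    rw [hdot]; ring
  have hS0 : 0 < S := by
    rw [hSval]
    rcases hab with h | h
    · linarith [mul_pos (sq_pos_of_ne_zero h) (hpos i0), mul_nonneg (sq_nonneg b) (hpos i1).le]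
    · linarith [mul_pos (sq_pos_of_ne_zero h) (hpos i1), mul_nonneg (sq_nonneg a) (hpos i0).le]
  have hr2 : r^2 * S = 1 := by
    rw [hrdef, inv_pow, Real.sq_sqrt hS0.le]
    exact inv_mul_cancel₀ (ne_of_gt hS0)
  have hr2S : r^2 * (a^2*σ i0 + b^2*σ i1) = 1 := by rw [← hSval]; exact hr2
  have hgt' : gt = (r*a) • u i0 + (r*b) • u i1 := by
    rw [hgt, hgab, smul_add, smul_smul, smul_smul]
  have hPgt : P *ᵥ gt = (r*a*σ i0) • u i0 + (r*b*σ i1) • u i1 := by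
    rw [hgt', mulVec_add, mulVec_smul, mulVec_smul, hPu, hPu]
    module
  -- the restricted 2×2 matrix
  set M11 : ℝ := c*(σ i0 - β*r^2*a^2*(σ i0)^2) with hM11def
  set M12 : ℝ := -(c*β*r^2*a*b*(σ i0)*(σ i1)) with hM12def
  set M22 : ℝ := c*(σ i1 - β*r^2*b^2*(σ i1)^2) with hM22def
  have hact : ∀ p q : ℝ, P' *ᵥ (p • u i0 + q • u i1)
      = (M11*p + M12*q) • u i0 + (M12*p + M22*q) • u i1 := by
    intro p q
    have hPv : P *ᵥ (p • u i0 + q • u i1) = (σ i0*p) • u i0 + (σ i1*q) • u i1 := by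
      rw [mulVec_add, mulVec_smul, mulVec_smul, hPu, hPu]; module
    rw [hP', smul_mulVec, sub_mulVec, smul_mulVec, ← mulVec_mulVec, ← mulVec_mulVec,
      hPv, vmv_mulVec, mulVec_smul, hPgt]
    have hdotv : gt ⬝ᵥ ((σ i0*p) • u i0 + (σ i1*q) • u i1) = r*a*(σ i0*p) + r*b*(σ i1*q) := by
      conv_lhs => rw [hgt']
      rw [hdot]
    rw [hdotv, hM11def, hM12def, hM22def]
    module
  have hext : ∀ A B A' B' : ℝ, (A • u i0 + B • u i1 = A' • u i0 + B' • u i1) → A = A' ∧ B = B' := by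
    intro A B A' B' h
    constructor
    · have h0' := congrArg (fun w => u i0 ⬝ᵥ w) h
      simpa [hd0] using h0'
    · have h1' := congrArg (fun w => u i1 ⬝ᵥ w) h
      simpa [hd1] using h1'
  have heig : ∀ (σ' p q : ℝ), P' *ᵥ (p • u i0 + q • u i1) = σ' • (p • u i0 + q • u i1) →
      M11*p + M12*q = σ'*p ∧ M12*p + M22*q = σ'*q := by
    intro σ' p q h
    rw [hact p q] at h
    have hr' : σ' • (p • u i0 + q • u i1) = (σ'*p) • u i0 + (σ'*q) • u i1 := by
      rw [smul_add, smul_smul, smul_smul]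
    rw [hr'] at h
    exact hext _ _ _ _ h
  constructor
  · -- part (i)
    intro i hi
    have hne0 : i0 ≠ i := by
      intro h
      have := congrArg Fin.val h
      simp [hi0def] at this
      omega
    have hne1 : i1 ≠ i := by
      intro h
      have := congrArg Fin.val h
      simp [hi1def] at this
      omega
    have hgti : gt ⬝ᵥ u i = 0 := by
      rw [hgt', add_dotProduct, smul_dotProduct, smul_dotProduct, horth, horth,
        if_neg hne0, if_neg hne1]
      simp
    rw [hP', smul_mulVec, sub_mulVec, smul_mulVec, ← mulVec_mulVec, ← mulVec_mulVec,
      hPu i, mulVec_smul, vmv_mulVec, hgti, zero_smul, smul_zero, mulVec_zero, smul_zero,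
      sub_zero, smul_smul]
  · intro σ'₁ σ'₂ v₁ v₂ hv₁ hv₂ hsp₁ hsp₂ hortho he₁ he₂ hle
    obtain ⟨p₁, q₁, hv1ab⟩ := hsp₁
    obtain ⟨p₂, q₂, hv2ab⟩ := hsp₂
    rw [hv1ab] at he₁
    rw [hv2ab] at he₂
    rw [hv1ab, hv2ab] at hortho
    obtain ⟨e1a, e1b⟩ := heig σ'₁ p₁ q₁ he₁
    obtain ⟨e2a, e2b⟩ := heig σ'₂ p₂ q₂ he₂
    have hort : p₁*p₂ + q₁*q₂ = 0 := by rw [← hdot p₁ q₁ p₂ q₂]; exact hortho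
    have hn1 : 0 < p₁^2 + q₁^2 := by
      rcases (show p₁ ≠ 0 ∨ q₁ ≠ 0 by
        by_contra h; push_neg at h
        exact hv₁ (by rw [hv1ab, h.1, h.2]; simp)) with h | h
      · linarith [sq_pos_of_ne_zero h, sq_nonneg q₁]
      · linarith [sq_pos_of_ne_zero h, sq_nonneg p₁]
    have hn2 : 0 < p₂^2 + q₂^2 := by
      rcases (show p₂ ≠ 0 ∨ q₂ ≠ 0 by
        by_contra h; push_neg at h
        exact hv₂ (by rw [hv2ab, h.1, h.2]; simp)) with h | h
      · linarith [sq_pos_of_ne_zero h, sq_nonneg q₂]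
      · linarith [sq_pos_of_ne_zero h, sq_nonneg p₂]
    have hC2 : (p₁*q₂ - p₂*q₁)^2 = (p₁^2+q₁^2)*(p₂^2+q₂^2) := by
      linear_combination (-(p₁*p₂+q₁*q₂)) * hort
    have hC : p₁*q₂ - p₂*q₁ ≠ 0 := by
      intro h
      rw [h] at hC2
      have := mul_pos hn1 hn2
      rw [← hC2] at this
      simp at this
    have hprod : σ'₁*σ'₂ = M11*M22 - M12^2 := by
      apply mul_right_cancel₀ hC
      calc σ'₁*σ'₂*(p₁*q₂ - p₂*q₁)
          = (σ'₁*p₁)*(σ'₂*q₂) - (σ'₁*q₁)*(σ'₂*p₂) := by ring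
        _ = (M11*p₁+M12*q₁)*(M12*p₂+M22*q₂) - (M12*p₁+M22*q₁)*(M11*p₂+M12*q₂) := by
            rw [← e1a, ← e1b, ← e2a, ← e2b]
        _ = (M11*M22 - M12^2)*(p₁*q₂ - p₂*q₁) := by ring
    have htr : σ'₁ + σ'₂ = M11 + M22 := by
      apply mul_right_cancel₀ hC
      calc (σ'₁+σ'₂)*(p₁*q₂ - p₂*q₁)
          = (σ'₁*p₁)*q₂ - (σ'₁*q₁)*p₂ + p₁*(σ'₂*q₂) - q₁*(σ'₂*p₂) := by ring
        _ = (M11*p₁+M12*q₁)*q₂ - (M12*p₁+M22*q₁)*p₂ + p₁*(M12*p₂+M22*q₂)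
              - q₁*(M11*p₂+M12*q₂) := by
            rw [← e1a, ← e1b, ← e2a, ← e2b]
        _ = (M11+M22)*(p₁*q₂ - p₂*q₁) := by ring
    have hCS : ∀ p q : ℝ, (a*σ i0*p + b*σ i1*q)^2
        ≤ (a^2*σ i0 + b^2*σ i1)*(σ i0*p^2 + σ i1*q^2) := by
      intro p q
      have key : (a^2*σ i0 + b^2*σ i1)*(σ i0*p^2 + σ i1*q^2) - (a*σ i0*p + b*σ i1*q)^2
          = (σ i0*σ i1)*((a*q - b*p)^2) := by ring
      linarith [key, mul_nonneg (mul_pos (hpos i0) (hpos i1)).le (sq_nonneg (a*q - b*p))]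
    have hQup : ∀ p q : ℝ, p*(M11*p+M12*q) + q*(M12*p+M22*q) ≤ c*(σ i0*p^2 + σ i1*q^2) := by
      intro p q
      have h := mul_nonneg (mul_nonneg (mul_nonneg hc.le hβ) (sq_nonneg r))
        (sq_nonneg (a*σ i0*p + b*σ i1*q))
      have key : c*(σ i0*p^2 + σ i1*q^2) - (p*(M11*p+M12*q) + q*(M12*p+M22*q))
          = ((c*β)*r^2)*((a*σ i0*p + b*σ i1*q)^2) := by
        rw [hM11def, hM12def, hM22def]; ring
      linarith [key, h]
    have hQlo : ∀ p q : ℝ, c*(1-β)*(σ i0*p^2 + σ i1*q^2)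
        ≤ p*(M11*p+M12*q) + q*(M12*p+M22*q) := by
      intro p q
      have h1' : r^2*((a*σ i0*p + b*σ i1*q)^2)
          ≤ r^2*((a^2*σ i0 + b^2*σ i1)*(σ i0*p^2 + σ i1*q^2)) :=
        mul_le_mul_of_nonneg_left (hCS p q) (sq_nonneg r)
      have h2' : r^2*((a^2*σ i0 + b^2*σ i1)*(σ i0*p^2 + σ i1*q^2)) = σ i0*p^2 + σ i1*q^2 := by
        rw [← mul_assoc, hr2S, one_mul]
      rw [h2'] at h1'
      have h3 := mul_le_mul_of_nonneg_left h1' (mul_nonneg hc.le hβ)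
      have key : (p*(M11*p+M12*q) + q*(M12*p+M22*q)) - c*(1-β)*(σ i0*p^2 + σ i1*q^2)
          = (c*β)*(σ i0*p^2 + σ i1*q^2) - (c*β)*(r^2*((a*σ i0*p + b*σ i1*q)^2)) := by
        rw [hM11def, hM12def, hM22def]; ring
      linarith [key, h3]
    have hQ1 : σ'₁*(p₁^2+q₁^2) = p₁*(M11*p₁+M12*q₁) + q₁*(M12*p₁+M22*q₁) := by
      rw [e1a, e1b]; ring
    have hQ2 : σ'₂*(p₂^2+q₂^2) = p₂*(M11*p₂+M12*q₂) + q₂*(M12*p₂+M22*q₂) := by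
      rw [e2a, e2b]; ring
    have hσ10 : σ i1 ≤ σ i0 := hdecr i0 i1 (by simp [hi0def, hi1def, Fin.mk_le_mk])
    have h1mβ : 0 < 1 - β := by linarith
    have hb1 : σ'₁ ≤ c*σ i0 := by
      have h1' : c*(σ i0*p₁^2 + σ i1*q₁^2) ≤ c*σ i0*(p₁^2+q₁^2) := by
        have key : c*σ i0*(p₁^2+q₁^2) - c*(σ i0*p₁^2 + σ i1*q₁^2) = (c*q₁^2)*(σ i0 - σ i1) := by
          ring
        linarith [key, mul_nonneg (mul_nonneg hc.le (sq_nonneg q₁)) (sub_nonneg.2 hσ10)]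
      have h2' : σ'₁*(p₁^2+q₁^2) ≤ (c*σ i0)*(p₁^2+q₁^2) := by
        rw [hQ1]; linarith [hQup p₁ q₁, h1']
      exact le_of_mul_le_mul_right h2' hn1
    have hb2 : c*(1-β)*σ i1 ≤ σ'₂ := by
      have h1' : c*(1-β)*σ i1*(p₂^2+q₂^2) ≤ c*(1-β)*(σ i0*p₂^2 + σ i1*q₂^2) := by
        have key : c*(1-β)*(σ i0*p₂^2 + σ i1*q₂^2) - c*(1-β)*σ i1*(p₂^2+q₂^2)
            = ((c*(1-β))*p₂^2)*(σ i0 - σ i1) := by ring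
        linarith [key, mul_nonneg (mul_nonneg (mul_pos hc h1mβ).le (sq_nonneg p₂))
          (sub_nonneg.2 hσ10)]
      have h3' : (c*(1-β)*σ i1)*(p₂^2+q₂^2) ≤ σ'₂*(p₂^2+q₂^2) := by
        rw [hQ2]; linarith [hQlo p₂ q₂, h1']
      exact le_of_mul_le_mul_right h3' hn2
    have hM11lo : c*(1-β)*σ i0 ≤ M11 := by
      have h' := hQlo 1 0
      linarith [h']
    have hM22up : M22 ≤ c*σ i1 := by
      have h' := hQup 0 1
      linarith [h']
    obtain ⟨hs1, hs2⟩ := eig22_bounds σ'₁ σ'₂ M11 M12 M22 htr hprod hle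
    have hdetval : M11*M22 - M12^2 = c^2*(σ i0)*(σ i1)*(1-β) := by
      rw [hM11def, hM12def, hM22def]
      linear_combination (-(c^2*σ i0*σ i1*β)) * hr2S
    have hd1' : (d:ℝ) - 1 ≠ 0 := by linarith
    have hd1'' : (d:ℝ) + 1 ≠ 0 := by linarith
    have h1a' : 1 + α ≠ 0 := ne_of_gt h1a
    have hd21' : (d:ℝ)^2 - 1 ≠ 0 := ne_of_gt hd21
    have hcc : c^2*(1-β) = (d:ℝ)^4*(1-α)^3*(1+α)/(((d:ℝ)+1)^3*((d:ℝ)-1)) := by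
      rw [hcdef, hβdef]
      field_simp
      ring
    have hc1b : c*(1-β) = (d:ℝ)^2*(1-α)^2/((d:ℝ)+1)^2 := by
      rw [hcdef, hβdef]
      field_simp
      ring
    refine ⟨?_, ?_, ?_, ?_, ?_, ?_⟩
    · show σ'₁*σ'₂/(σ i0*σ i1) = _
      rw [hprod, hdetval, ← hcc]
      field_simp [ne_of_gt (hpos i0), ne_of_gt (hpos i1)]
    · rw [div_lt_one (mul_pos (by positivity) (by linarith : (0:ℝ) < (d:ℝ)-1))]
      exact ratio_lt_one (d:ℝ) α hd2 hda hα₂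
    · show (d:ℝ)^2*(1-α)^2/((d:ℝ)+1)^2 * σ i0 ≤ σ'₁
      rw [← hc1b]
      linarith [hM11lo, hs1]
    · show σ'₁ ≤ c * σ i0
      exact hb1
    · show (d:ℝ)^2*(1-α)^2/((d:ℝ)+1)^2 * σ i1 ≤ σ'₂
      rw [← hc1b]
      linarith [hb2]
    · show σ'₂ ≤ c * σ i1
      linarith [hs2, hM22up]
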